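/- Let λ^{(1)}, …, λ^{(q)} be nonnegative rate vectors in ℝ^k, let s ∈ {1,…,q}, and let j ∈ {1,…,k} be such that Σ_{i=1}^{q} λ_j^{(i)} > 0. Then lim_{h→0⁺} [ p(λ^{(s)}; j, h) · ∏_{i≠s} p(λ^{(i)}; 0, h) ] / p(Σ_{i=1}^{q} λ^{(i)}; j, h) = λ_j^{(s)} / Σ_{i=1}^{q} λ_j^{(i)}. In words: a packet of jumps of size j registered in the merged process of q independent GCPs originates from the s-th component, in the small-interval limit, with probability λ_j^{(s)} / Σ_i λ_j^{(i)}. -/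

import Mathlib

open Finset

/-- The set `Ω(k, n)` of tuples `x : Fin k → ℕ` with `∑_{j=1}^k j * x_j = n`
(`j : Fin k` represents the jump size `j + 1`). -/
def gcpOmega (k n : ℕ) : Finset (Fin k → ℕ) :=
  (Fintype.piFinset fun _ : Fin k => Finset.range (n + 1)).filter
    fun x => ∑ j : Fin k, (j.1 + 1) * x j = n

/-- The probability mass function of the generalized counting process with jump
rates `lam j` for jumps of size `j + 1`, evaluated at state `n` and time `t`. -/
noncomputable def gcpPMF (k : ℕ) (lam : Fin k → ℝ) (n : ℕ) (t : ℝ) : ℝ :=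
  ∑ x ∈ gcpOmega k n,
    ∏ j : Fin k, (lam j * t) ^ (x j) / (Nat.factorial (x j)) * Real.exp (-(lam j * t))

open Filter Topology

/-- The constant coefficient of a summand. -/
noncomputable def gcpC (k : ℕ) (lam : Fin k → ℝ) (x : Fin k → ℕ) : ℝ :=
  ∏ j : Fin k, lam j ^ (x j) / (Nat.factorial (x j))

lemma gcp_summand_eq (k : ℕ) (lam : Fin k → ℝ) (x : Fin k → ℕ) (t : ℝ) :
    (∏ j : Fin k, (lam j * t) ^ (x j) / (Nat.factorial (x j)) * Real.exp (-(lam j * t)))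
      = gcpC k lam x * t ^ (∑ j : Fin k, x j) * ∏ j : Fin k, Real.exp (-(lam j * t)) := by
  rw [Finset.prod_mul_distrib]
  congr 1
  rw [gcpC, ← Finset.prod_pow_eq_pow_sum, ← Finset.prod_mul_distrib]
  apply Finset.prod_congr rfl
  intro j _
  rw [mul_pow]
  ring

lemma gcpOmega_zero (k : ℕ) : gcpOmega k 0 = {fun _ => 0} := by
  ext x
  simp only [gcpOmega, Finset.mem_filter, Fintype.mem_piFinset, Finset.mem_range,
    Finset.mem_singleton, Finset.sum_eq_zero_iff, Finset.mem_univ, true_implies]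
  constructor
  · rintro ⟨-, h2⟩
    funext j
    have := h2 j
    rcases Nat.mul_eq_zero.mp this with h | h
    · omega
    · exact h
  · rintro rfl
    simp

lemma gcpPMF_zero_eq (k : ℕ) (lam : Fin k → ℝ) (t : ℝ) :
    gcpPMF k lam 0 t = ∏ j : Fin k, Real.exp (-(lam j * t)) := by
  rw [gcpPMF, gcpOmega_zero, Finset.sum_singleton]
  simp

lemma tendsto_gcpPMF_zero (k : ℕ) (lam : Fin k → ℝ) :
    Tendsto (fun t => gcpPMF k lam 0 t) (𝓝[>] (0 : ℝ)) (𝓝 1) := by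
  have hc : Continuous fun t : ℝ => ∏ j : Fin k, Real.exp (-(lam j * t)) := by
    apply continuous_finset_prod
    intro j _
    exact (Real.continuous_exp.comp (by continuity))
  have h : Tendsto (fun t : ℝ => ∏ j : Fin k, Real.exp (-(lam j * t))) (𝓝[>] (0 : ℝ))
      (𝓝 (∏ j : Fin k, Real.exp (-(lam j * 0)))) :=
    tendsto_nhdsWithin_of_tendsto_nhds (hc.tendsto 0)
  simp only [mul_zero, neg_zero, Real.exp_zero, Finset.prod_const_one] at h
  exact h.congr fun t => (gcpPMF_zero_eq k lam t).symm

lemma sum_pos_of_mem_gcpOmega {k n : ℕ} (hn : 0 < n) {x : Fin k → ℕ}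
    (hx : x ∈ gcpOmega k n) : 1 ≤ ∑ j : Fin k, x j := by
  rw [gcpOmega, Finset.mem_filter] at hx
  by_contra h
  push_neg at h
  rw [Nat.lt_one_iff, Finset.sum_eq_zero_iff] at h
  have : ∑ j : Fin k, (j.1 + 1) * x j = 0 := by
    apply Finset.sum_eq_zero
    intro j hj
    rw [h j hj]
    ring
  omega

lemma single_mem_gcpOmega {k : ℕ} (j : Fin k) :
    Pi.single j 1 ∈ gcpOmega k (j.1 + 1) := by
  rw [gcpOmega, Finset.mem_filter]
  constructor
  · rw [Fintype.mem_piFinset]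
    intro j'
    rw [Finset.mem_range]
    rcases eq_or_ne j' j with rfl | h
    · rw [Pi.single_eq_same]; omega
    · rw [Pi.single_eq_of_ne h]; omega
  · rw [Finset.sum_eq_single j]
    · rw [Pi.single_eq_same, mul_one]
    · intro j' _ h
      rw [Pi.single_eq_of_ne h, mul_zero]
    · simp

lemma eq_single_of_sum_eq_one {k : ℕ} (j : Fin k) {x : Fin k → ℕ}
    (hx : x ∈ gcpOmega k (j.1 + 1)) (h1 : ∑ j' : Fin k, x j' = 1) :
    x = Pi.single j 1 := by
  rw [gcpOmega, Finset.mem_filter] at hx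
  obtain ⟨j0, -, hj0⟩ := Finset.exists_ne_zero_of_sum_ne_zero (by omega :
    ∑ j' : Fin k, x j' ≠ 0)
  have hle : x j0 ≤ 1 := h1 ▸ Finset.single_le_sum (f := x) (fun _ _ => Nat.zero_le _)
    (Finset.mem_univ j0)
  have hx0 : x j0 = 1 := by omega
  have herase : ∑ j' ∈ Finset.univ.erase j0, x j' = 0 := by
    have := Finset.add_sum_erase Finset.univ x (Finset.mem_univ j0)
    omega
  rw [Finset.sum_eq_zero_iff] at herase
  have hzero : ∀ j' : Fin k, j' ≠ j0 → x j' = 0 := by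
    intro j' h
    exact herase j' (Finset.mem_erase.mpr ⟨h, Finset.mem_univ j'⟩)
  have hsum : ∑ j' : Fin k, (j'.1 + 1) * x j' = (j0.1 + 1) * x j0 := by
    apply Finset.sum_eq_single_of_mem j0 (Finset.mem_univ j0)
    intro j' _ h
    rw [hzero j' h, mul_zero]
  have hj : j0 = j := by
    have := hx.2
    rw [hsum, hx0, mul_one] at this
    exact Fin.ext (by omega)
  subst hj
  funext j'
  rcases eq_or_ne j' j0 with rfl | h
  · rw [Pi.single_eq_same, hx0]
  · rw [Pi.single_eq_of_ne h, hzero j' h]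

lemma gcpC_single {k : ℕ} (lam : Fin k → ℝ) (j : Fin k) :
    gcpC k lam (Pi.single j 1) = lam j := by
  rw [gcpC, Finset.prod_eq_single j]
  · rw [Pi.single_eq_same]
    simp
  · intro j' _ h
    rw [Pi.single_eq_of_ne h]
    simp
  · simp

lemma tendsto_gcpPMF_div (k : ℕ) (lam : Fin k → ℝ) (j : Fin k) :
    Tendsto (fun t => gcpPMF k lam (j.1 + 1) t / t) (𝓝[>] (0 : ℝ)) (𝓝 (lam j)) := by
  set g : ℝ → ℝ := fun t => ∑ x ∈ gcpOmega k (j.1 + 1),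
    gcpC k lam x * t ^ (∑ j' : Fin k, x j' - 1) * ∏ j' : Fin k, Real.exp (-(lam j' * t))
    with hg
  have heq : (fun t => gcpPMF k lam (j.1 + 1) t / t) =ᶠ[𝓝[>] (0 : ℝ)] g := by
    filter_upwards [self_mem_nhdsWithin] with t ht
    have ht0 : (t : ℝ) ≠ 0 := ne_of_gt ht
    rw [gcpPMF, Finset.sum_div, hg]
    apply Finset.sum_congr rfl
    intro x hx
    rw [gcp_summand_eq]
    have h1 : 1 ≤ ∑ j' : Fin k, x j' := sum_pos_of_mem_gcpOmega (Nat.succ_pos _) hx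
    have : t ^ (∑ j' : Fin k, x j') = t * t ^ (∑ j' : Fin k, x j' - 1) := by
      rw [← pow_succ']
      congr 1
      omega
    rw [this]
    field_simp
  have hlim : Tendsto g (𝓝[>] (0 : ℝ))
      (𝓝 (∑ x ∈ gcpOmega k (j.1 + 1),
        gcpC k lam x * (0 : ℝ) ^ (∑ j' : Fin k, x j' - 1) * 1)) := by
    apply tendsto_finset_sum
    intro x _
    have hc : Continuous fun t : ℝ =>
        gcpC k lam x * t ^ (∑ j' : Fin k, x j' - 1) * ∏ j' : Fin k, Real.exp (-(lam j' * t)) := by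
      apply Continuous.mul
      · exact continuous_const.mul (continuous_pow _)
      · apply continuous_finset_prod
        intro j' _
        exact Real.continuous_exp.comp (by continuity)
    have h : Tendsto (fun t : ℝ => gcpC k lam x * t ^ (∑ j' : Fin k, x j' - 1) *
        ∏ j' : Fin k, Real.exp (-(lam j' * t))) (𝓝[>] (0 : ℝ))
        (𝓝 (gcpC k lam x * (0 : ℝ) ^ (∑ j' : Fin k, x j' - 1) *
          ∏ j' : Fin k, Real.exp (-(lam j' * 0)))) :=
      tendsto_nhdsWithin_of_tendsto_nhds (hc.tendsto 0)
    simpa using h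
  have hval : (∑ x ∈ gcpOmega k (j.1 + 1),
      gcpC k lam x * (0 : ℝ) ^ (∑ j' : Fin k, x j' - 1) * 1) = lam j := by
    rw [Finset.sum_eq_single_of_mem (Pi.single j 1) (single_mem_gcpOmega j)]
    · rw [gcpC_single]
      have hsum : ∑ j' : Fin k, Pi.single j (1 : ℕ) j' = 1 := by
        simp [Pi.single_apply]
      rw [hsum]
      norm_num
    · intro x hx hne
      have h1 : 1 ≤ ∑ j' : Fin k, x j' := sum_pos_of_mem_gcpOmega (Nat.succ_pos _) hx
      have h2 : ∑ j' : Fin k, x j' ≠ 1 := by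
        intro h
        exact hne (eq_single_of_sum_eq_one j hx h)
      have : (0 : ℝ) ^ (∑ j' : Fin k, x j' - 1) = 0 := by
        apply zero_pow
        omega
      rw [this]
      ring
  rw [← hval]
  exact hlim.congr' heq.symm

lemma myDivHelper (a b d h : ℝ) (hh : h ≠ 0) : a / h * b / (d / h) = a * b / d := by
  rw [div_eq_mul_inv (a / h * b), inv_div]
  have : a / h * b * (h / d) = a * b / d * (h / h) := by ring
  rw [this, div_self hh, mul_one]

open Filter Topology in
/-- A packet of jumps of size `j + 1` (for `j : Fin k`) registered in the merged
process of `q` independent GCPs originates from the `s`-th component, in the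
small-interval limit, with probability `λ_j^{(s)} / ∑ i, λ_j^{(i)}`. -/
theorem jump_origin_probability_many_gcps (k : ℕ) (hk : 1 ≤ k) (q : ℕ) (hq : 1 ≤ q)
    (lam : Fin q → Fin k → ℝ) (hlam : ∀ i j', 0 ≤ lam i j') (s : Fin q) (j : Fin k)
    (hpos : 0 < ∑ i : Fin q, lam i j) :
    Tendsto
      (fun h => gcpPMF k (lam s) (j.1 + 1) h *
        (∏ i ∈ Finset.univ.erase s, gcpPMF k (lam i) 0 h) /
        gcpPMF k (fun j' => ∑ i : Fin q, lam i j') (j.1 + 1) h)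
      (𝓝[>] (0 : ℝ)) (𝓝 (lam s j / ∑ i : Fin q, lam i j)) := by
  have hA := tendsto_gcpPMF_div k (lam s) j
  have hD := tendsto_gcpPMF_div k (fun j' => ∑ i : Fin q, lam i j') j
  have hB : Tendsto (fun h => ∏ i ∈ Finset.univ.erase s, gcpPMF k (lam i) 0 h)
      (𝓝[>] (0 : ℝ)) (𝓝 1) := by
    have := tendsto_finset_prod (Finset.univ.erase s)
      (fun i _ => tendsto_gcpPMF_zero k (lam i))
    simpa using this
  have hne : (∑ i : Fin q, lam i j) ≠ 0 := ne_of_gt hpos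
  have hcomb := ((hA.mul hB).div hD hne)
  rw [mul_one] at hcomb
  apply hcomb.congr'
  filter_upwards [self_mem_nhdsWithin] with h hh
  exact myDivHelper _ _ _ h (ne_of_gt hh)
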